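/- Let X = { z ∈ ℂ : |z| = 1 } be the unit circle with the metric inherited from the Euclidean (chordal) metric of ℂ. Then for every pair of faithful and diffuse Borel probability measures μ, ν on X, and every ε > 0, there exists a homeomorphism h : X → X that is homotopic to the identity map of X, such that W_∞(μ, h_*ν) < ε and sup_{z ∈ X} |h(z) − z| < W_∞(μ, ν) + ε, where h_*ν denotes the pushforward measure ν ∘ h⁻¹. -/

import Mathlib

open MeasureTheory Set Real
open scoped ENNReal
set_option linter.unusedSectionVars false
set_option linter.unusedVariables false

/-- The ∞-Wasserstein distance between two Borel measures on a metric space: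
`W_∞(μ, ν) = inf { r > 0 : μ(U) ≤ ν(U_r) and ν(U) ≤ μ(U_r) for every open U }`,
where `U_r` is the open `r`-neighbourhood of `U`. -/
noncomputable def infWasserstein {X : Type*} [MetricSpace X] [MeasurableSpace X]
    (μ ν : Measure X) : ℝ :=
  sInf { r : ℝ | 0 < r ∧ ∀ U : Set X, IsOpen U →
    μ U ≤ ν (Metric.thickening r U) ∧ ν U ≤ μ (Metric.thickening r U) }


namespace CTC

noncomputable section

abbrev S : Set ℂ := {z : ℂ | ‖z‖ = 1}

def pt (t : ℝ) : S := ⟨Complex.exp ((2 * π * t : ℝ) * Complex.I), by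
  simp [S, Complex.norm_exp]⟩

lemma pt_coe (t : ℝ) : (pt t : ℂ) = Complex.exp ((2 * π * t : ℝ) * Complex.I) := rfl

lemma continuous_pt : Continuous pt := by
  apply Continuous.subtype_mk
  exact Complex.continuous_exp.comp (by continuity)

def ang (z : S) : ℝ := Complex.arg z / (2 * π)

lemma pt_ang (z : S) : pt (ang z) = z := by
  apply Subtype.ext
  rw [pt_coe, ang]
  rw [show (2 * π * (Complex.arg (z:ℂ) / (2 * π)) : ℝ) = Complex.arg z by
    field_simp]
  have := Complex.norm_mul_exp_arg_mul_I (z : ℂ)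
  rw [z.2, Complex.ofReal_one, one_mul] at this
  exact this

lemma ang_mem (z : S) : ang z ∈ Ioc (-(1/2) : ℝ) (1/2) := by
  have h1 := Complex.arg_mem_Ioc (z : ℂ)
  have hπ : (0:ℝ) < 2 * π := by positivity
  constructor
  · rw [ang, lt_div_iff₀ hπ]; nlinarith [h1.1]
  · rw [ang, div_le_iff₀ hπ]; nlinarith [h1.2]

lemma ang_pt_of {t : ℝ} (ht : t ∈ Ioc (-(1/2) : ℝ) (1/2)) : ang (pt t) = t := by
  have hπ : (0:ℝ) < 2 * π := by positivity
  have h : Complex.arg ((pt t : ℂ)) = 2 * π * t := by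
    rw [pt_coe, Complex.arg_exp_mul_I]
    refine (toIocMod_eq_self _).2 ⟨by nlinarith [ht.1], by nlinarith [ht.2]⟩
  rw [ang, h]
  field_simp

lemma pt_add_int (t : ℝ) (n : ℤ) : pt (t + n) = pt t := by
  apply Subtype.ext
  rw [pt_coe, pt_coe]
  have h : ((2 * π * (t + n) : ℝ) : ℂ) * Complex.I
      = (2 * π * t : ℝ) * Complex.I + n * (2 * π * Complex.I) := by
    push_cast; ring
  rw [h, Complex.exp_add, Complex.exp_int_mul_two_pi_mul_I, mul_one]

lemma pt_eq_imp {u v : ℝ} (h : pt u = pt v) : ∃ n : ℤ, u = v + n := by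
  have hc : (pt u : ℂ) = (pt v : ℂ) := by rw [h]
  rw [pt_coe, pt_coe] at hc
  have h1 : Complex.exp ((2 * π * u : ℝ) * Complex.I - (2 * π * v : ℝ) * Complex.I) = 1 := by
    rw [Complex.exp_sub, hc, div_self (Complex.exp_ne_zero _)]
  rw [Complex.exp_eq_one_iff] at h1
  obtain ⟨n, hn⟩ := h1
  refine ⟨n, ?_⟩
  have him := congrArg Complex.im hn
  simp only [Complex.sub_im, Complex.mul_im, Complex.ofReal_re, Complex.I_im,
    Complex.ofReal_im, Complex.I_re, Complex.intCast_im, Complex.intCast_re,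
    Complex.mul_re, Complex.re_ofNat, Complex.im_ofNat] at him
  have hπ := Real.pi_pos
  nlinarith [him]

lemma ang_pt (t : ℝ) : ang (pt t) = t - ⌈t - 1/2⌉ := by
  have h1 : (t - ⌈t - 1/2⌉ : ℝ) ∈ Ioc (-(1/2) : ℝ) (1/2) := by
    constructor
    · have := Int.ceil_lt_add_one (t - 1/2); linarith
    · have := Int.le_ceil (t - 1/2); linarith
  conv_lhs => rw [show t = (t - (⌈t - 1/2⌉ : ℤ)) + (⌈t - 1/2⌉ : ℤ) by ring]
  rw [pt_add_int]
  exact ang_pt_of h1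

lemma dist_pt (u v : ℝ) : dist (pt u) (pt v) = 2 * |Real.sin (π * (u - v))| := by
  have key : ∀ θ : ℝ, ‖Complex.exp ((θ:ℝ) * Complex.I) - 1‖
      = 2 * |Real.sin (θ/2)| := by
    intro θ
    have h1 : Complex.exp ((θ:ℝ) * Complex.I) - 1
        = ((Real.cos θ - 1 : ℝ) : ℂ) + ((Real.sin θ : ℝ) : ℂ) * Complex.I := by
      rw [Complex.exp_mul_I, ← Complex.ofReal_cos, ← Complex.ofReal_sin]
      push_cast
      ring
    rw [h1, Complex.norm_add_mul_I]
    have hc : Real.cos θ = 1 - 2 * Real.sin (θ/2)^2 := by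
      have h := Real.cos_two_mul (θ/2)
      have h2 := Real.sin_sq_add_cos_sq (θ/2)
      rw [show 2*(θ/2) = θ by ring] at h
      nlinarith
    have h2 : (Real.cos θ - 1)^2 + (Real.sin θ)^2 = (2 * |Real.sin (θ/2)|)^2 := by
      have hpyth := Real.sin_sq_add_cos_sq θ
      have habs := sq_abs (Real.sin (θ/2))
      nlinarith
    rw [h2, Real.sqrt_sq (by positivity)]
  rw [Subtype.dist_eq, Complex.dist_eq, pt_coe, pt_coe]
  have h3 : Complex.exp ((2*π*u : ℝ) * Complex.I) - Complex.exp ((2*π*v : ℝ) * Complex.I)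
      = Complex.exp ((2*π*v : ℝ) * Complex.I) * (Complex.exp ((2*π*(u-v) : ℝ) * Complex.I) - 1) := by
    rw [mul_sub, mul_one, ← Complex.exp_add]
    congr 2
    push_cast; ring
  rw [h3, norm_mul, Complex.norm_exp, key (2*π*(u-v))]
  rw [show (2*π*(u-v))/2 = π * (u-v) by ring]
  simp

section Meas

lemma isClosed_S : IsClosed S := by
  have h : S = (fun z : ℂ => ‖z‖) ⁻¹' {1} := rfl
  rw [h]
  exact isClosed_singleton.preimage continuous_norm

instance : CompactSpace S := by
  rw [← isCompact_iff_compactSpace]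
  apply Metric.isCompact_of_isClosed_isBounded isClosed_S
  apply (Metric.isBounded_closedBall (x := (0:ℂ)) (r := 1)).subset
  intro z hz
  simp only [S, mem_setOf_eq] at hz
  simp [Metric.mem_closedBall, Complex.dist_eq, hz]

instance : Nonempty S := ⟨pt 0⟩

instance : PolishSpace S := IsClosed.polishSpace isClosed_S

lemma measurable_ang : Measurable ang :=
  (Complex.measurable_arg.comp measurable_subtype_coe).div_const _

lemma ang_injective : Function.Injective ang := by
  intro z w h
  rw [← pt_ang z, ← pt_ang w, h]

def mta (μ : Measure S) : Measure ℝ := μ.map ang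

lemma mta_apply (μ : Measure S) {s : Set ℝ} (hs : MeasurableSet s) :
    mta μ s = μ (ang ⁻¹' s) := Measure.map_apply measurable_ang hs

instance (μ : Measure S) [IsProbabilityMeasure μ] : IsProbabilityMeasure (mta μ) :=
  Measure.isProbabilityMeasure_map measurable_ang.aemeasurable

variable (μ : Measure S) [IsProbabilityMeasure μ]

def F0 (x : ℝ) : ℝ := (mta μ (Iic x)).toReal

lemma F0_nonneg (x : ℝ) : 0 ≤ F0 μ x := ENNReal.toReal_nonneg

lemma mta_Iic (x : ℝ) : mta μ (Iic x) = ENNReal.ofReal (F0 μ x) :=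
  (ENNReal.ofReal_toReal (measure_ne_top _ _)).symm

lemma F0_mono : Monotone (F0 μ) := by
  intro x y hxy
  exact ENNReal.toReal_mono (measure_ne_top _ _) (measure_mono (Iic_subset_Iic.2 hxy))

lemma F0_le_one (x : ℝ) : F0 μ x ≤ 1 := by
  have h : mta μ (Iic x) ≤ 1 := prob_le_one
  calc (mta μ (Iic x)).toReal ≤ (1 : ℝ≥0∞).toReal := ENNReal.toReal_mono (by simp) h
    _ = 1 := by simp

lemma mta_Ioc (u v : ℝ) : mta μ (Ioc u v) = ENNReal.ofReal (F0 μ v - F0 μ u) := by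
  rcases le_or_gt u v with h | h
  · rw [← Iic_sdiff_Iic, measure_diff (Iic_subset_Iic.2 h) nullMeasurableSet_Iic
      (measure_ne_top _ _), mta_Iic, mta_Iic, ENNReal.ofReal_sub _ (F0_nonneg μ u)]
  · rw [Ioc_eq_empty (by linarith), measure_empty]
    symm
    rw [ENNReal.ofReal_eq_zero]
    have := F0_mono μ h.le
    linarith

lemma F0_of_le {x : ℝ} (hx : x ≤ -(1/2)) : F0 μ x = 0 := by
  have h : ang ⁻¹' (Iic x) = (∅ : Set S) := by
    ext z
    simp only [mem_preimage, mem_Iic, mem_empty_iff_false, iff_false, not_le]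
    have := (ang_mem z).1
    linarith
  rw [F0, mta_apply μ measurableSet_Iic, h, measure_empty]
  simp

lemma F0_of_ge {x : ℝ} (hx : 1/2 ≤ x) : F0 μ x = 1 := by
  have h : ang ⁻¹' (Iic x) = (univ : Set S) := by
    ext z
    simp only [mem_preimage, mem_Iic, mem_univ, iff_true]
    have := (ang_mem z).2
    linarith
  rw [F0, mta_apply μ measurableSet_Iic, h, measure_univ]
  simp

lemma mta_singleton (hd : ∀ z : S, μ {z} = 0) (x : ℝ) : mta μ {x} = 0 := by
  rw [mta_apply μ (measurableSet_singleton x)]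
  refine measure_mono_null ?_ (hd (pt x))
  intro z hz
  simp only [mem_preimage, mem_singleton_iff] at hz ⊢
  rw [← pt_ang z, hz]

lemma isOpen_arc {a b : ℝ} (h1 : a < b) (h2 : b ≤ a + 1) : IsOpen (pt '' Ioo a b) := by
  have hcl : IsClosed (pt '' Icc b (a+1)) := (isCompact_Icc.image continuous_pt).isClosed
  have hcompl : pt '' Ioo a b = (pt '' Icc b (a+1))ᶜ := by
    ext z
    simp only [mem_image, mem_compl_iff, not_exists]
    constructor
    · rintro ⟨t, ht, rfl⟩
      rintro t' ⟨ht', heq⟩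
      obtain ⟨n, hn⟩ := pt_eq_imp heq
      have h3 : (n : ℝ) = t' - t := by linarith
      have h4 : (0:ℝ) < n := by rw [h3]; linarith [ht.2, ht'.1]
      have h5 : (n:ℝ) < 1 := by rw [h3]; linarith [ht.1, ht'.2]
      have h6 : (0:ℤ) < n := by exact_mod_cast h4
      have h7 : (n:ℤ) < 1 := by exact_mod_cast h5
      omega
    · intro hz
      set n : ℤ := ⌊a - ang z⌋ + 1 with hn
      set t := ang z + n with htdef
      have hta : a < t := by
        have hfl := Int.lt_floor_add_one (a - ang z)
        have : a - ang z < (n : ℝ) := by rw [hn]; push_cast; linarith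
        linarith
      have htb : t ≤ a + 1 := by
        have hfl := Int.floor_le (a - ang z)
        have : (n : ℝ) ≤ a - ang z + 1 := by rw [hn]; push_cast; linarith
        linarith
      have hzt : pt t = z := by
        rw [htdef, pt_add_int, pt_ang]
      rcases lt_or_ge t b with h | h
      · exact ⟨t, ⟨hta, h⟩, hzt⟩
      · exact absurd ⟨⟨h, htb⟩, hzt⟩ (hz t)
  rw [hcompl]
  exact hcl.isOpen_compl

lemma arc_nonempty {a b : ℝ} (h : a < b) : (pt '' Ioo a b).Nonempty :=
  ⟨pt ((a+b)/2), mem_image_of_mem _ ⟨by linarith, by linarith⟩⟩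

lemma pt_image_Ioc_chart {a b : ℝ} (ha : -(1/2) ≤ a) (hb : b ≤ 1/2) :
    pt '' Ioc a b = ang ⁻¹' Ioc a b := by
  ext z
  constructor
  · rintro ⟨t, ht, rfl⟩
    have h : ang (pt t) = t := ang_pt_of ⟨lt_of_le_of_lt ha ht.1, le_trans ht.2 hb⟩
    simpa [mem_preimage, h] using ht
  · intro hz
    exact ⟨ang z, hz, pt_ang z⟩

lemma F0_strict (hf : ∀ U : Set S, IsOpen U → U.Nonempty → 0 < μ U)
    {x y : ℝ} (h1 : -(1/2) ≤ x) (h2 : x < y) (h3 : y ≤ 1/2) : F0 μ x < F0 μ y := by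
  have key : 0 < mta μ (Ioc x y) := by
    rw [mta_apply μ measurableSet_Ioc, ← pt_image_Ioc_chart h1 h3]
    calc (0:ℝ≥0∞) < μ (pt '' Ioo x y) :=
          hf _ (isOpen_arc h2 (by linarith)) (arc_nonempty h2)
      _ ≤ μ (pt '' Ioc x y) := measure_mono (image_mono Ioo_subset_Ioc_self)
  rw [mta_Ioc] at key
  have := ENNReal.ofReal_pos.1 key
  linarith

lemma exists_F0 (hd : ∀ z : S, μ {z} = 0) {y : ℝ} (hy1 : 0 < y) (hy2 : y < 1) :
    ∃ x ∈ Ioo (-(1/2):ℝ) (1/2), F0 μ x = y := by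
  set E := {t : ℝ | y ≤ F0 μ t} with hE
  have hne : (1/2 : ℝ) ∈ E := by
    simp only [hE, mem_setOf_eq, F0_of_ge μ le_rfl]
    linarith
  have hbdd : BddBelow E := by
    refine ⟨-(1/2), fun t ht => ?_⟩
    by_contra hlt
    push_neg at hlt
    have := F0_of_le μ hlt.le
    simp only [hE, mem_setOf_eq] at ht
    linarith
  set x := sInf E with hx
  have hub : y ≤ F0 μ x := by
    have hseq : Filter.Tendsto (fun n : ℕ => mta μ (Iic (x + 1/(n+1)))) Filter.atTop
        (nhds (mta μ (⋂ n : ℕ, Iic (x + 1/(n+1))))) := by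
      apply tendsto_measure_iInter_atTop
      · exact fun n => nullMeasurableSet_Iic
      · intro m n hmn
        apply Iic_subset_Iic.2
        have h1 : (1:ℝ)/(n+1) ≤ 1/(m+1) := by
          apply div_le_div_of_nonneg_left one_pos.le (by positivity)
          have : (m:ℝ) ≤ n := by exact_mod_cast hmn
          linarith
        linarith
      · exact ⟨0, measure_ne_top _ _⟩
    have hInter : (⋂ n : ℕ, Iic (x + 1/(n+1))) = Iic x := by
      ext t
      simp only [mem_iInter, mem_Iic]
      constructor
      · intro h
        by_contra hlt
        push_neg at hlt
        obtain ⟨n, hn⟩ := exists_nat_one_div_lt (show (0:ℝ) < t - x by linarith)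
        have := h n
        linarith [hn]
      · intro h n
        have : (0:ℝ) < 1/(n+1) := by positivity
        linarith
    rw [hInter] at hseq
    have hlow : ∀ n : ℕ, ENNReal.ofReal y ≤ mta μ (Iic (x + 1/(n+1))) := by
      intro n
      have hpos : (0:ℝ) < 1/(n+1) := by positivity
      obtain ⟨t, htE, htlt⟩ := (csInf_lt_iff hbdd ⟨_, hne⟩).1
        (show sInf E < x + 1/(n+1) by rw [← hx]; linarith)
      rw [mta_Iic]
      apply ENNReal.ofReal_le_ofReal
      calc y ≤ F0 μ t := htE
        _ ≤ F0 μ (x + 1/(n+1)) := F0_mono μ htlt.le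
    have := ge_of_tendsto hseq (Filter.Eventually.of_forall hlow)
    rw [mta_Iic] at this
    exact (ENNReal.ofReal_le_ofReal_iff (F0_nonneg μ x)).1 this
  have hlb : F0 μ x ≤ y := by
    have hsub : Iic x = Iio x ∪ {x} := by
      ext t; simp only [mem_Iic, mem_union, mem_Iio, mem_singleton_iff]
      constructor
      · intro h; rcases lt_or_eq_of_le h with h | h; exacts [Or.inl h, Or.inr h]
      · rintro (h | rfl); exacts [h.le, le_rfl]
    have h1 : mta μ (Iic x) ≤ mta μ (Iio x) + mta μ {x} := hsub ▸ measure_union_le _ _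
    rw [mta_singleton μ hd, add_zero] at h1
    have h2 : mta μ (Iio x) ≤ ENNReal.ofReal y := by
      have hUnion : (⋃ n : ℕ, Iic (x - 1/(n+1))) = Iio x := by
        ext t
        simp only [mem_iUnion, mem_Iic, mem_Iio]
        constructor
        · rintro ⟨n, hn⟩
          have : (0:ℝ) < 1/(n+1) := by positivity
          linarith
        · intro h
          obtain ⟨n, hn⟩ := exists_nat_one_div_lt (show (0:ℝ) < x - t by linarith)
          exact ⟨n, by linarith⟩
      have hseq : Filter.Tendsto (fun n : ℕ => mta μ (Iic (x - 1/(n+1)))) Filter.atTop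
          (nhds (mta μ (⋃ n : ℕ, Iic (x - 1/(n+1))))) := by
        apply tendsto_measure_iUnion_atTop
        intro m n hmn
        apply Iic_subset_Iic.2
        have h1 : (1:ℝ)/(n+1) ≤ 1/(m+1) := by
          apply div_le_div_of_nonneg_left one_pos.le (by positivity)
          have : (m:ℝ) ≤ n := by exact_mod_cast hmn
          linarith
        linarith
      rw [hUnion] at hseq
      apply le_of_tendsto hseq
      apply Filter.Eventually.of_forall
      intro n
      have hpos : (0:ℝ) < 1/(n+1) := by positivity
      have hnotE : x - 1/(n+1) ∉ E := fun hmem =>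
        absurd (csInf_le hbdd hmem) (by rw [← hx]; push_neg; linarith)
      simp only [hE, mem_setOf_eq, not_le] at hnotE
      rw [mta_Iic]
      exact ENNReal.ofReal_le_ofReal hnotE.le
    have h3 : ENNReal.ofReal (F0 μ x) ≤ ENNReal.ofReal y := by
      rw [← mta_Iic]; exact le_trans h1 h2
    exact (ENNReal.ofReal_le_ofReal_iff hy1.le).1 h3
  have heq : F0 μ x = y := le_antisymm hlb hub
  refine ⟨x, ⟨?_, ?_⟩, heq⟩
  · by_contra h
    push_neg at h
    have := F0_of_le μ h
    rw [heq] at this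
    linarith
  · by_contra h
    push_neg at h
    have := F0_of_ge μ h
    rw [heq] at this
    linarith

end Meas

section FF

lemma pt_sub_int (t : ℝ) (n : ℤ) : pt (t - n) = pt t := by
  have h := pt_add_int (t - n) n
  rw [sub_add_cancel] at h
  exact h.symm

lemma pt_image_Ioc_shift (a b : ℝ) (n : ℤ) :
    pt '' Ioc (a + n) (b + n) = pt '' Ioc a b := by
  ext z
  simp only [mem_image]
  constructor
  · rintro ⟨t, ht, rfl⟩
    refine ⟨t - n, ⟨by linarith [ht.1], by linarith [ht.2]⟩, pt_sub_int t n⟩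
  · rintro ⟨t, ht, rfl⟩
    refine ⟨t + n, ⟨by linarith [ht.1], by linarith [ht.2]⟩, pt_add_int t n⟩

variable (μ : Measure S) [IsProbabilityMeasure μ]

def Fr (x : ℝ) : ℝ := (⌈x - 1/2⌉ : ℤ) + F0 μ (x - ⌈x - 1/2⌉)

lemma ceil_shift_mem (x : ℝ) : x - ⌈x - 1/2⌉ ∈ Ioc (-(1/2):ℝ) (1/2) :=
  ⟨by have := Int.ceil_lt_add_one (x - 1/2); linarith,
   by have := Int.le_ceil (x - 1/2); linarith⟩

lemma Fr_eq_F0 {x : ℝ} (h1 : -(1/2) < x) (h2 : x ≤ 1/2) : Fr μ x = F0 μ x := by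
  have h : ⌈x - 1/2⌉ = 0 := by
    rw [Int.ceil_eq_zero_iff]
    constructor <;> simp <;> linarith
  rw [Fr, h]
  push_cast
  norm_num

lemma Fr_eq_F0_Icc {x : ℝ} (h1 : -(1/2) ≤ x) (h2 : x ≤ 1/2) : Fr μ x = F0 μ x := by
  rcases eq_or_lt_of_le h1 with h | h
  · subst h
    have hce : ⌈(-(1/2):ℝ) - 1/2⌉ = -1 := by
      rw [show (-(1/2):ℝ) - 1/2 = ((-1 : ℤ) : ℝ) by norm_num, Int.ceil_intCast]
    rw [Fr, hce]
    have : (-(1/2):ℝ) - ((-1 : ℤ) : ℝ) = 1/2 := by push_cast; norm_num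
    rw [this, F0_of_ge μ le_rfl, F0_of_le μ le_rfl]
    push_cast; ring
  · exact Fr_eq_F0 μ h h2

lemma Fr_add_int (x : ℝ) (n : ℤ) : Fr μ (x + n) = Fr μ x + n := by
  have h : ⌈x + n - 1/2⌉ = ⌈x - 1/2⌉ + n := by
    rw [show x + (n:ℝ) - 1/2 = (x - 1/2) + n by ring, Int.ceil_add_intCast]
  rw [Fr, Fr, h]
  push_cast
  ring_nf

lemma Fr_add_one (x : ℝ) : Fr μ (x + 1) = Fr μ x + 1 := by
  have := Fr_add_int μ x 1
  push_cast at this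
  exact this

lemma Fr_strictMono (hf : ∀ U : Set S, IsOpen U → U.Nonempty → 0 < μ U) :
    StrictMono (Fr μ) := by
  intro x y hxy
  have hmono : ⌈x - 1/2⌉ ≤ ⌈y - 1/2⌉ := Int.ceil_le_ceil (by linarith)
  have hxmem := ceil_shift_mem x
  have hymem := ceil_shift_mem y
  rcases eq_or_lt_of_le hmono with heq | hlt
  · have hxy' : x - ((⌈y - 1/2⌉ : ℤ) : ℝ) ∈ Ioc (-(1/2):ℝ) (1/2) := by
      rw [← heq]; exact hxmem
    have h : F0 μ (x - ⌈y - 1/2⌉) < F0 μ (y - ⌈y - 1/2⌉) :=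
      F0_strict μ hf hxy'.1.le (by linarith) hymem.2
    rw [Fr, Fr, heq]
    linarith
  · have h1 : F0 μ (x - ⌈x - 1/2⌉) ≤ 1 := F0_le_one μ _
    have h2 : 0 < F0 μ (y - ⌈y - 1/2⌉) := by
      have h3 := F0_strict μ hf (le_refl (-(1/2))) hymem.1 hymem.2
      rw [F0_of_le μ le_rfl] at h3
      linarith
    have h3 : ((⌈x - 1/2⌉:ℤ) : ℝ) + 1 ≤ ((⌈y - 1/2⌉:ℤ) : ℝ) := by exact_mod_cast hlt
    rw [Fr, Fr]
    linarith

lemma Fr_surjective (hf : ∀ U : Set S, IsOpen U → U.Nonempty → 0 < μ U)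
    (hd : ∀ z : S, μ {z} = 0) : Function.Surjective (Fr μ) := by
  intro y
  set k := ⌊y⌋ with hk
  have h1 : 0 ≤ y - k := by have := Int.floor_le y; linarith
  have h2 : y - k < 1 := by have := Int.lt_floor_add_one y; linarith
  rcases eq_or_lt_of_le h1 with h | h
  · refine ⟨-(1/2) + k, ?_⟩
    rw [Fr_add_int, Fr_eq_F0_Icc μ le_rfl (by norm_num), F0_of_le μ le_rfl]
    linarith
  · obtain ⟨x, hx, hFx⟩ := exists_F0 μ hd h h2
    refine ⟨x + k, ?_⟩
    rw [Fr_add_int, Fr_eq_F0 μ hx.1 hx.2.le, hFx]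
    ring

lemma arc_measure (hd : ∀ z : S, μ {z} = 0) :
    ∀ a b : ℝ, a ≤ b → b ≤ a + 1 → μ (pt '' Ioc a b) = ENNReal.ofReal (Fr μ b - Fr μ a) := by
  have chart : ∀ a b : ℝ, a ∈ Ioc (-(1/2):ℝ) (1/2) → a ≤ b → b ≤ a + 1 →
      μ (pt '' Ioc a b) = ENNReal.ofReal (Fr μ b - Fr μ a) := by
    intro a b ha hab hba
    rcases le_or_gt b (1/2) with hb | hb
    · rw [pt_image_Ioc_chart ha.1.le hb, ← mta_apply μ measurableSet_Ioc, mta_Ioc,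
        Fr_eq_F0 μ ha.1 ha.2, Fr_eq_F0 μ (lt_of_lt_of_le ha.1 hab) hb]
    · have hsplit : Ioc a b = Ioc a (1/2) ∪ Ioc (1/2) b :=
        (Ioc_union_Ioc_eq_Ioc ha.2 hb.le).symm
      have hshift : pt '' Ioc (1/2 : ℝ) b = pt '' Ioc (-(1/2)) (b - 1) := by
        have := pt_image_Ioc_shift (-(1/2)) (b-1) 1
        rw [show (-(1/2):ℝ) + (1:ℤ) = 1/2 by push_cast; norm_num,
          show (b-1) + ((1:ℤ):ℝ) = b by push_cast; ring] at this
        exact this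
      have hb1 : b - 1 ≤ a := by linarith
      have hb2 : -(1/2) < b - 1 := by linarith
      have e1 : pt '' Ioc a (1/2) = ang ⁻¹' Ioc a (1/2) :=
        pt_image_Ioc_chart ha.1.le le_rfl
      have e2 : pt '' Ioc (-(1/2):ℝ) (b-1) = ang ⁻¹' Ioc (-(1/2)) (b-1) :=
        pt_image_Ioc_chart le_rfl (by linarith [ha.2])
      have hdisj : Disjoint (ang ⁻¹' Ioc a (1/2)) (ang ⁻¹' (Ioc (-(1/2):ℝ) (b-1))) := by
        apply Disjoint.preimage
        rw [Set.disjoint_left]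
        intro t ht1 ht2
        exact absurd (lt_of_le_of_lt (le_trans ht2.2 hb1) ht1.1) (lt_irrefl t)
      have hmeas : MeasurableSet (ang ⁻¹' (Ioc (-(1/2):ℝ) (b-1))) :=
        measurable_ang measurableSet_Ioc
      have hsplit2 : pt '' Ioc a b = pt '' Ioc a (1/2) ∪ pt '' Ioc (1/2) b := by
        rw [hsplit, image_union]
      rw [hsplit2, hshift, e1, e2, measure_union hdisj hmeas]
      rw [← mta_apply μ measurableSet_Ioc, ← mta_apply μ measurableSet_Ioc, mta_Ioc, mta_Ioc]
      rw [← ENNReal.ofReal_add (by linarith [F0_mono μ (ha.2 : a ≤ 1/2)])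
        (by linarith [F0_mono μ (le_of_lt hb2)])]
      congr 1
      have g1 : Fr μ a = F0 μ a := Fr_eq_F0 μ ha.1 ha.2
      have g2 : Fr μ b = F0 μ (b - 1) + 1 := by
        have : Fr μ (b - 1 + 1) = Fr μ (b-1) + 1 := Fr_add_one μ (b-1)
        rw [show b - 1 + 1 = b by ring] at this
        rw [this, Fr_eq_F0 μ hb2 (by linarith [hb1, ha.2])]
      rw [g1, g2, F0_of_ge μ le_rfl, F0_of_le μ le_rfl]
      ring
  intro a b hab hba
  set n := ⌈a - 1/2⌉ with hn
  have hmem := ceil_shift_mem a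
  have hshift : pt '' Ioc a b = pt '' Ioc (a - n) (b - n) := by
    have := pt_image_Ioc_shift (a - n) (b - n) n
    rw [show (a - n) + (n:ℝ) = a by ring, show (b - n) + (n:ℝ) = b by ring] at this
    exact this
  rw [hshift, chart (a - n) (b - n) hmem (by linarith) (by linarith)]
  rw [show a - (n:ℝ) = a + (-n : ℤ) by push_cast; ring,
    show b - (n:ℝ) = b + (-n : ℤ) by push_cast; ring, Fr_add_int, Fr_add_int]
  congr 1
  ring

lemma arc_measure_Ioo (hd : ∀ z : S, μ {z} = 0) {a b : ℝ} (hab : a ≤ b) (hba : b ≤ a + 1) :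
    μ (pt '' Ioo a b) = ENNReal.ofReal (Fr μ b - Fr μ a) := by
  rcases eq_or_lt_of_le hab with h | h
  · subst h
    rw [Ioo_self, image_empty, measure_empty, sub_self, ENNReal.ofReal_zero]
  · have h1 : Ioc a b = Ioo a b ∪ {b} := (Ioo_union_right h).symm
    have h2 : μ (pt '' Ioc a b) ≤ μ (pt '' Ioo a b) := by
      rw [h1, image_union, image_singleton]
      calc μ (pt '' Ioo a b ∪ {pt b}) ≤ μ (pt '' Ioo a b) + μ {pt b} := measure_union_le _ _
        _ = μ (pt '' Ioo a b) := by rw [hd (pt b), add_zero]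
    have h3 : μ (pt '' Ioo a b) ≤ μ (pt '' Ioc a b) :=
      measure_mono (image_mono Ioo_subset_Ioc_self)
    rw [← arc_measure μ hd a b hab hba]
    exact le_antisymm h3 h2

end FF

section Ineq

lemma abs_sin_pi {d : ℝ} (h1 : -(1/2) ≤ d) (h2 : d ≤ 1/2) :
    |Real.sin (π * d)| = Real.sin (π * |d|) := by
  rcases le_or_gt 0 d with h | h
  · rw [abs_of_nonneg h, abs_of_nonneg]
    apply Real.sin_nonneg_of_nonneg_of_le_pi (by positivity)
    nlinarith [Real.pi_pos]
  · have hpos : 0 ≤ Real.sin (π * (-d)) :=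
      Real.sin_nonneg_of_nonneg_of_le_pi (by nlinarith [Real.pi_pos]) (by nlinarith [Real.pi_pos])
    have hneg : Real.sin (π * d) = -Real.sin (π * (-d)) := by
      rw [show π * d = -(π * (-d)) by ring, Real.sin_neg]
    rw [abs_of_neg h, hneg, abs_neg, abs_of_nonneg hpos]

lemma abs_sin_reduce (d : ℝ) (n : ℤ) : |Real.sin (π * (d - n))| = |Real.sin (π * d)| := by
  have h : π * d = π * (d - n) + n * π := by ring
  rw [h, Real.sin_add_int_mul_pi, abs_mul]
  have h2 : |((-1:ℝ))^n| = 1 := by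
    rcases Int.even_or_odd n with he | ho
    · rw [he.neg_one_zpow]; norm_num
    · rw [ho.neg_one_zpow]; norm_num
  rw [h2, one_mul]

lemma thickening_arc_subset {a b s' : ℝ} (hs1 : 0 < s') (hs2 : s' ≤ 1/2) :
    Metric.thickening (2 * Real.sin (π * s')) (pt '' Ioo a b) ⊆ pt '' Ioo (a - s') (b + s') := by
  intro z hz
  rw [Metric.mem_thickening_iff] at hz
  obtain ⟨w, ⟨t, ht, rfl⟩, hdist⟩ := hz
  have hz' : z = pt (ang z) := (pt_ang z).symm
  set d := ang z - t with hd
  set n := ⌈d - 1/2⌉ with hn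
  set d' := d - n with hd'
  have hmem : d' ∈ Ioc (-(1/2):ℝ) (1/2) := ceil_shift_mem d
  have hdist' : dist z (pt t) = 2 * |Real.sin (π * d')| := by
    rw [hz', dist_pt, ← hd, hd', abs_sin_reduce]
  rw [hdist'] at hdist
  have habs : |Real.sin (π * d')| = Real.sin (π * |d'|) :=
    abs_sin_pi (by linarith [hmem.1]) hmem.2
  rw [habs] at hdist
  have hlt : |d'| < s' := by
    by_contra hge
    push_neg at hge
    have hd2 : |d'| ≤ 1/2 := abs_le.2 ⟨by linarith [hmem.1], hmem.2⟩
    have hle : Real.sin (π * s') ≤ Real.sin (π * |d'|) :=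
      Real.strictMonoOn_sin.monotoneOn
        (Set.mem_Icc.2 ⟨by nlinarith [Real.pi_pos], by nlinarith [Real.pi_pos]⟩)
        (Set.mem_Icc.2 ⟨by nlinarith [Real.pi_pos, abs_nonneg d'], by nlinarith [Real.pi_pos]⟩)
        (by nlinarith [Real.pi_pos])
    linarith
  refine ⟨t + d', ⟨by linarith [ht.1, abs_lt.1 hlt], by linarith [ht.2, (abs_lt.1 hlt).2]⟩, ?_⟩
  have : pt (t + d') = pt (t + d' + n) := (pt_add_int (t + d') n).symm
  rw [this, show t + d' + (n:ℝ) = ang z by rw [hd']; ring, ← hz']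

lemma key_ineq (μ ν : Measure S) [IsProbabilityMeasure μ] [IsProbabilityMeasure ν]
    (hfμ : ∀ U : Set S, IsOpen U → U.Nonempty → 0 < μ U)
    (hfν : ∀ U : Set S, IsOpen U → U.Nonempty → 0 < ν U)
    (hdμ : ∀ z : S, μ {z} = 0) (hdν : ∀ z : S, ν {z} = 0)
    {s' : ℝ} (hs1 : 0 < s') (hs2 : s' ≤ 1/2)
    (hr : ∀ U : Set S, IsOpen U → μ U ≤ ν (Metric.thickening (2 * Real.sin (π * s')) U)) :
    ∀ a b : ℝ, a ≤ b → Fr μ b - Fr μ a ≤ Fr ν (b + s') - Fr ν (a - s') := by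
  have hμmono : Monotone (Fr μ) := (Fr_strictMono μ hfμ).monotone
  have hνmono : Monotone (Fr ν) := (Fr_strictMono ν hfν).monotone
  have core : ∀ a b : ℝ, a ≤ b → b - a < 1 →
      Fr μ b - Fr μ a ≤ Fr ν (b + s') - Fr ν (a - s') := by
    intro a b hab hlen
    rcases eq_or_lt_of_le hab with h | h
    · subst h
      have := hνmono (show a - s' ≤ a + s' by linarith)
      linarith
    rcases le_or_gt 1 (b - a + 2*s') with hbig | hsmall
    · have h1 : Fr μ b ≤ Fr μ a + 1 := by
        have := hμmono (show b ≤ a + 1 by linarith)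
        rw [Fr_add_one] at this
        linarith
      have h2 : Fr ν (a - s') + 1 ≤ Fr ν (b + s') := by
        have := hνmono (show a - s' + 1 ≤ b + s' by linarith)
        rw [Fr_add_one] at this
        linarith
      linarith
    · have hsub := thickening_arc_subset (a := a) (b := b) hs1 hs2
      have h1 : μ (pt '' Ioo a b) ≤ ν (pt '' Ioo (a - s') (b + s')) :=
        le_trans (hr _ (isOpen_arc h (by linarith))) (measure_mono hsub)
      rw [arc_measure_Ioo μ hdμ hab (by linarith),
        arc_measure_Ioo ν hdν (by linarith) (by linarith)] at h1
      have h2 : (0:ℝ) ≤ Fr ν (b + s') - Fr ν (a - s') := by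
        have := hνmono (show a - s' ≤ b + s' by linarith)
        linarith
      exact (ENNReal.ofReal_le_ofReal_iff h2).1 h1
  have main : ∀ n : ℕ, ∀ a b : ℝ, a ≤ b → b - a < n + 1 →
      Fr μ b - Fr μ a ≤ Fr ν (b + s') - Fr ν (a - s') := by
    intro n
    induction n with
    | zero => intro a b hab hlen; exact core a b hab (by push_cast at hlen; linarith)
    | succ n ih =>
      intro a b hab hlen
      rcases lt_or_ge (b - a) (n + 1) with hc | hc
      · exact ih a b hab hc
      · have hble : a + 1 ≤ b := by
          have h0 : (0:ℝ) ≤ (n:ℝ) := Nat.cast_nonneg n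
          linarith
        have h1 := ih (a + 1) b (by linarith) (by push_cast at hlen ⊢; linarith)
        have h2 : Fr μ (a + 1) = Fr μ a + 1 := Fr_add_one μ a
        have h3 : Fr ν (a + 1 - s') = Fr ν (a - s') + 1 := by
          rw [show a + 1 - s' = (a - s') + 1 by ring, Fr_add_one]
        rw [h3] at h1
        linarith [h1, h2]
  intro a b hab
  obtain ⟨n, hn⟩ := exists_nat_gt (b - a)
  exact main n a b hab (by linarith)

end Ineq

section Transport

lemma oi_add_one_symm (Φ : ℝ ≃o ℝ) (hΦ : ∀ x, Φ (x + 1) = Φ x + 1) (y : ℝ) :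
    Φ.symm (y + 1) = Φ.symm y + 1 := by
  apply Φ.injective
  rw [Φ.apply_symm_apply, hΦ, Φ.apply_symm_apply]

lemma oi_add_nat (Φ : ℝ ≃o ℝ) (hΦ : ∀ x, Φ (x + 1) = Φ x + 1) (k : ℕ) (x : ℝ) :
    Φ (x + k) = Φ x + k := by
  induction k with
  | zero => simp
  | succ k ih =>
    push_cast
    rw [show x + ((k:ℝ) + 1) = (x + (k:ℝ)) + 1 by ring, hΦ, ih]
    ring

lemma oi_add_int (Φ : ℝ ≃o ℝ) (hΦ : ∀ x, Φ (x + 1) = Φ x + 1) (n : ℤ) (x : ℝ) :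
    Φ (x + n) = Φ x + n := by
  rcases le_or_gt 0 n with hn | hn
  · obtain ⟨k, rfl⟩ := Int.eq_ofNat_of_zero_le hn
    push_cast
    exact oi_add_nat Φ hΦ k x
  · obtain ⟨k, rfl⟩ := Int.exists_eq_neg_ofNat hn.le
    have h1 := oi_add_nat Φ hΦ k (x - k)
    rw [show x - (k:ℝ) + (k:ℝ) = x by ring] at h1
    push_cast
    rw [show x + -(k:ℝ) = x - (k:ℝ) by ring]
    linarith

lemma oi_symm_add_int (Φ : ℝ ≃o ℝ) (hΦ : ∀ x, Φ (x + 1) = Φ x + 1) (n : ℤ) (y : ℝ) :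
    Φ.symm (y + n) = Φ.symm y + n :=
  oi_add_int Φ.symm (oi_add_one_symm Φ hΦ) n y

def circMap (H : ℝ ≃o ℝ) : S → S := fun z => pt (H (ang z))

lemma circMap_pt (H : ℝ ≃o ℝ) (hH : ∀ x, H (x + 1) = H x + 1) (t : ℝ) :
    circMap H (pt t) = pt (H t) := by
  rw [circMap, ang_pt]
  rw [show t - ((⌈t - 1/2⌉ : ℤ) : ℝ) = t + ((-⌈t - 1/2⌉ : ℤ) : ℝ) by push_cast; ring]
  rw [oi_add_int H hH]
  rw [show H t + ((-⌈t - 1/2⌉ : ℤ) : ℝ) = H t - ((⌈t - 1/2⌉:ℤ) : ℝ) by push_cast; ring]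
  exact pt_sub_int _ _

def circEquiv (H : ℝ ≃o ℝ) (hH : ∀ x, H (x + 1) = H x + 1) : S ≃ S where
  toFun := circMap H
  invFun := circMap H.symm
  left_inv z := by
    have h1 : circMap H z = pt (H (ang z)) := rfl
    rw [h1, circMap_pt H.symm (oi_add_one_symm H hH), OrderIso.symm_apply_apply, pt_ang]
  right_inv z := by
    have h1 : circMap H.symm z = pt (H.symm (ang z)) := rfl
    rw [h1, circMap_pt H hH, OrderIso.apply_symm_apply, pt_ang]

def ang2 (z : S) : ℝ := Complex.arg (-(z:ℂ)) / (2 * π) + 1/2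

lemma pt_ang2 (z : S) : pt (ang2 z) = z := by
  apply Subtype.ext
  rw [pt_coe, ang2]
  have h0 : (2 * π * (Complex.arg (-(z:ℂ)) / (2 * π) + 1/2) : ℝ)
      = Complex.arg (-(z:ℂ)) + π := by
    field_simp
  rw [h0]
  have h1 : ((Complex.arg (-(z:ℂ)) + π : ℝ) : ℂ) * Complex.I
      = ((Complex.arg (-(z:ℂ)) : ℝ) : ℂ) * Complex.I + (π : ℂ) * Complex.I := by
    push_cast; ring
  rw [h1, Complex.exp_add, Complex.exp_pi_mul_I]
  have habs : ‖(-(z:ℂ))‖ = 1 := by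
    rw [norm_neg]
    exact z.2
  have h2 := Complex.norm_mul_exp_arg_mul_I (-(z:ℂ))
  rw [habs, Complex.ofReal_one, one_mul] at h2
  rw [h2]
  ring

lemma ang2_sub_ang (z : S) : ∃ n : ℤ, ang2 z = ang z + n := by
  apply pt_eq_imp
  rw [pt_ang2, pt_ang]

lemma S_coe_eq (z : S) : ‖(z:ℂ)‖ = 1 := z.2

lemma continuousAt_ang {z : S} (hz : (z:ℂ) ≠ -1) : ContinuousAt ang z := by
  have hcond : 0 < (z:ℂ).re ∨ (z:ℂ).im ≠ 0 := by
    by_contra hcon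
    push_neg at hcon
    obtain ⟨hre, him⟩ := hcon
    have habs : ‖(z:ℂ)‖ = 1 := z.2
    have h3 : (z:ℂ).re^2 + (z:ℂ).im^2 = 1 := by
      have hsq := Complex.sq_norm (z:ℂ)
      rw [habs, Complex.normSq_apply] at hsq
      nlinarith [hsq]
    rw [him] at h3
    have h4 : (z:ℂ).re = -1 := by nlinarith
    apply hz
    apply Complex.ext
    · simpa using h4
    · simpa using him
  have h5 : ContinuousAt Complex.arg ((fun w : S => (w:ℂ)) z) := Complex.continuousAt_arg hcond
  exact (h5.comp continuous_subtype_val.continuousAt).div_const _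

lemma continuousAt_ang2 {z : S} (hz : (z:ℂ) ≠ 1) : ContinuousAt ang2 z := by
  have hcond : 0 < (-(z:ℂ)).re ∨ (-(z:ℂ)).im ≠ 0 := by
    by_contra hcon
    push_neg at hcon
    obtain ⟨hre, him⟩ := hcon
    have habs : ‖(z:ℂ)‖ = 1 := z.2
    have h3 : (z:ℂ).re^2 + (z:ℂ).im^2 = 1 := by
      have hsq := Complex.sq_norm (z:ℂ)
      rw [habs, Complex.normSq_apply] at hsq
      nlinarith [hsq]
    have him' : (z:ℂ).im = 0 := by
      have := him
      simpa using this
    rw [him'] at h3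
    have hre' : 0 ≤ (z:ℂ).re := by
      have := hre
      simp only [Complex.neg_re] at this
      linarith
    have h4 : (z:ℂ).re = 1 := by nlinarith
    apply hz
    apply Complex.ext
    · simpa using h4
    · simpa using him'
  have h5 : ContinuousAt Complex.arg ((fun w : S => -(w:ℂ)) z) := Complex.continuousAt_arg hcond
  have h6 : ContinuousAt (fun w : S => -(w:ℂ)) z := continuous_subtype_val.neg.continuousAt
  have h7 := ContinuousAt.comp (f := fun w : S => -(w:ℂ)) h5 h6
  exact (h7.div_const _).add continuousAt_const

def bigraw (H : ℝ ≃o ℝ) : ℝ × S → S :=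
  fun q => pt ((1 - q.1) * H (ang q.2) + q.1 * ang q.2)

lemma continuous_OI (H : ℝ ≃o ℝ) : Continuous H := H.toHomeomorph.continuous

lemma continuous_bigraw (H : ℝ ≃o ℝ) (hH : ∀ x, H (x + 1) = H x + 1) :
    Continuous (bigraw H) := by
  rw [continuous_iff_continuousAt]
  rintro ⟨u, z⟩
  by_cases hz : (z:ℂ) = -1
  · have heqfun : bigraw H = fun q : ℝ × S => pt ((1 - q.1) * H (ang2 q.2) + q.1 * ang2 q.2) := by
      funext q
      obtain ⟨n, hn⟩ := ang2_sub_ang q.2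
      rw [bigraw, hn, oi_add_int H hH]
      rw [show (1 - q.1) * (H (ang q.2) + (n:ℝ)) + q.1 * (ang q.2 + (n:ℝ))
          = ((1 - q.1) * H (ang q.2) + q.1 * ang q.2) + (n:ℝ) by ring]
      exact (pt_add_int _ n).symm
    rw [heqfun]
    have hz1 : (z:ℂ) ≠ 1 := by
      rw [hz]
      intro hcon
      have : (-1 : ℂ) ≠ 1 := by norm_num
      exact this hcon
    have hang2 : ContinuousAt (fun q : ℝ × S => ang2 q.2) (u, z) :=
      ContinuousAt.comp (g := ang2) (f := fun q : ℝ × S => q.2) (continuousAt_ang2 hz1) continuousAt_snd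
    have hinner : ContinuousAt (fun q : ℝ × S =>
        (1 - q.1) * H (ang2 q.2) + q.1 * ang2 q.2) (u, z) :=
      (((continuousAt_const.sub continuousAt_fst).mul
        (((continuous_OI H).continuousAt).comp hang2)).add (continuousAt_fst.mul hang2))
    exact (continuous_pt.continuousAt).comp hinner
  · have hang : ContinuousAt (fun q : ℝ × S => ang q.2) (u, z) :=
      ContinuousAt.comp (g := ang) (f := fun q : ℝ × S => q.2) (continuousAt_ang hz) continuousAt_snd
    have hinner : ContinuousAt (fun q : ℝ × S =>
        (1 - q.1) * H (ang q.2) + q.1 * ang q.2) (u, z) :=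
      (((continuousAt_const.sub continuousAt_fst).mul
        (((continuous_OI H).continuousAt).comp hang)).add (continuousAt_fst.mul hang))
    exact (continuous_pt.continuousAt).comp hinner

lemma continuous_circMap (H : ℝ ≃o ℝ) (hH : ∀ x, H (x + 1) = H x + 1) :
    Continuous (circMap H) := by
  have h : circMap H = fun z => bigraw H (0, z) := by
    funext z
    rw [circMap, bigraw]
    norm_num
  rw [h]
  exact (continuous_bigraw H hH).comp (continuous_const.prodMk continuous_id)

def circHomeo (H : ℝ ≃o ℝ) (hH : ∀ x, H (x + 1) = H x + 1) : S ≃ₜ S :=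
  Continuous.homeoOfEquivCompactToT2 (f := circEquiv H hH) (continuous_circMap H hH)

lemma circHomeo_apply (H : ℝ ≃o ℝ) (hH : ∀ x, H (x + 1) = H x + 1) (z : S) :
    circHomeo H hH z = pt (H (ang z)) := rfl

lemma circHomeo_homotopic (H : ℝ ≃o ℝ) (hH : ∀ x, H (x + 1) = H x + 1) :
    ContinuousMap.Homotopic ((circHomeo H hH : C(S, S))) (ContinuousMap.id S) := by
  refine ⟨{ toFun := fun q => bigraw H ((q.1 : ℝ), q.2),
            continuous_toFun := (continuous_bigraw H hH).comp
              (by exact (continuous_subtype_val.comp continuous_fst).prodMk continuous_snd),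
            map_zero_left := ?_, map_one_left := ?_ }⟩
  · intro z
    show pt ((1 - ((0 : unitInterval) : ℝ)) * H (ang z) + ((0 : unitInterval) : ℝ) * ang z) = _
    rw [show ((0 : unitInterval) : ℝ) = 0 from rfl]
    rw [show (1 - (0:ℝ)) * H (ang z) + (0:ℝ) * ang z = H (ang z) by ring]
    rfl
  · intro z
    show pt ((1 - ((1 : unitInterval) : ℝ)) * H (ang z) + ((1 : unitInterval) : ℝ) * ang z) = _
    rw [show ((1 : unitInterval) : ℝ) = 1 from rfl]
    rw [show (1 - (1:ℝ)) * H (ang z) + (1:ℝ) * ang z = ang z by ring, pt_ang]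
    rfl

lemma map_ang_inj (μ₁ μ₂ : Measure S) (h : μ₁.map ang = μ₂.map ang) : μ₁ = μ₂ := by
  have hemb : MeasurableEmbedding ang := measurable_ang.measurableEmbedding ang_injective
  ext s hs
  have h1 : μ₁ s = μ₁.map ang (ang '' s) := by
    rw [Measure.map_apply measurable_ang (hemb.measurableSet_image.2 hs),
      preimage_image_eq s ang_injective]
  have h2 : μ₂ s = μ₂.map ang (ang '' s) := by
    rw [Measure.map_apply measurable_ang (hemb.measurableSet_image.2 hs),
      preimage_image_eq s ang_injective]
  rw [h1, h2, h]

lemma measurable_gred : Measurable (fun y : ℝ => y - ((⌈y - 1/2⌉ : ℤ) : ℝ)) := by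
  apply measurable_id.sub
  exact (continuous_of_discreteTopology.measurable).comp
    (Int.measurable_ceil.comp (measurable_id.sub measurable_const))

lemma pushforward_eq (μ ν : Measure S) [IsProbabilityMeasure μ] [IsProbabilityMeasure ν]
    (H : ℝ ≃o ℝ) (hH : ∀ x, H (x + 1) = H x + 1) (c : ℝ)
    (hc : ∀ y : ℝ, Fr ν (H.symm y) = Fr μ y - c) :
    Measure.map (circMap H) ν = μ := by
  have hmeasH : Measurable (circMap H) := (continuous_circMap H hH).measurable
  apply map_ang_inj
  rw [Measure.map_map measurable_ang hmeasH]
  have hcomp : Measurable (ang ∘ circMap H) := measurable_ang.comp hmeasH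
  haveI : IsProbabilityMeasure (ν.map (ang ∘ circMap H)) :=
    Measure.isProbabilityMeasure_map hcomp.aemeasurable
  haveI : IsProbabilityMeasure (μ.map ang) :=
    Measure.isProbabilityMeasure_map measurable_ang.aemeasurable
  apply Measure.ext_of_Iic
  intro v
  set B := {w : ℝ | H w - ((⌈H w - 1/2⌉ : ℤ) : ℝ) ≤ v} with hBdef
  have hBmeas : MeasurableSet B := by
    have : B = (fun w => H w - ((⌈H w - 1/2⌉:ℤ):ℝ)) ⁻¹' (Iic v) := rfl
    rw [this]
    exact (measurable_gred.comp (continuous_OI H).measurable) measurableSet_Iic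
  have hpre : (ang ∘ circMap H) ⁻¹' (Iic v) = ang ⁻¹' B := by
    ext z
    simp only [mem_preimage, Function.comp_apply, mem_Iic, hBdef, mem_setOf_eq]
    rw [show circMap H z = pt (H (ang z)) from rfl, ang_pt]
  rw [Measure.map_apply hcomp measurableSet_Iic, hpre, ← mta_apply ν hBmeas]
  show mta ν B = mta μ (Iic v)
  rcases le_or_gt v (-(1/2)) with hv | hv
  · have hBempty : B = ∅ := by
      ext w
      simp only [hBdef, mem_setOf_eq, mem_empty_iff_false, iff_false, not_le]
      have := (ceil_shift_mem (H w)).1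
      linarith
    rw [hBempty, measure_empty, mta_Iic, F0_of_le μ hv, ENNReal.ofReal_zero]
  rcases le_or_gt (1/2) v with hv2 | hv2
  · have hBuniv : B = univ := by
      ext w
      simp only [hBdef, mem_setOf_eq, mem_univ, iff_true]
      have := (ceil_shift_mem (H w)).2
      linarith
    rw [hBuniv, measure_univ, mta_Iic, F0_of_ge μ hv2, ENNReal.ofReal_one]
  -- main case
  set β := H (-(1/2)) with hβ
  set m : ℤ := ⌊β + 1/2⌋ with hm
  have hm1 : (m:ℝ) ≤ β + 1/2 := Int.floor_le _
  have hm2 : β + 1/2 < m + 1 := Int.lt_floor_add_one _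
  set u₁ := H.symm ((m:ℝ) + v) with hu1
  set u₂ := H.symm ((m:ℝ) + 1/2) with hu2
  set u₃ := H.symm ((m:ℝ) + 1 + v) with hu3
  have hβ12 : H (1/2) = β + 1 := by
    rw [hβ, ← hH (-(1/2))]
    norm_num
  have hu2a : -(1/2) < u₂ :=
    calc -(1/2) = H.symm β := (H.symm_apply_apply _).symm
      _ < u₂ := H.symm.strictMono (by linarith)
  have hu2b : u₂ ≤ 1/2 :=
    calc u₂ ≤ H.symm (β + 1) := H.symm.monotone (by linarith)
      _ = 1/2 := by rw [← hβ12, H.symm_apply_apply]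
  have hu2u3 : u₂ ≤ u₃ := H.symm.monotone (by linarith)
  have hB2 : mta ν B = mta ν (B ∩ Ioc (-(1/2)) (1/2)) := by
    have hIc : mta ν ((Ioc (-(1/2):ℝ) (1/2))ᶜ) = 0 := by
      rw [mta_apply ν measurableSet_Ioc.compl]
      have : ang ⁻¹' (Ioc (-(1/2):ℝ) (1/2))ᶜ = (∅ : Set S) := by
        ext z
        simp only [mem_preimage, mem_compl_iff, mem_empty_iff_false, iff_false, not_not]
        exact ang_mem z
      rw [this, measure_empty]
    apply le_antisymm _ (measure_mono inter_subset_left)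
    calc mta ν B ≤ mta ν ((B ∩ Ioc (-(1/2)) (1/2)) ∪ (Ioc (-(1/2):ℝ) (1/2))ᶜ) := by
          apply measure_mono
          intro w hw
          by_cases hwI : w ∈ Ioc (-(1/2):ℝ) (1/2)
          · exact Or.inl ⟨hw, hwI⟩
          · exact Or.inr hwI
      _ ≤ mta ν (B ∩ Ioc (-(1/2)) (1/2)) + mta ν ((Ioc (-(1/2):ℝ) (1/2))ᶜ) :=
          measure_union_le _ _
      _ = mta ν (B ∩ Ioc (-(1/2)) (1/2)) := by rw [hIc, add_zero]
  have hEq : B ∩ Ioc (-(1/2)) (1/2) = Ioc (-(1/2)) (min u₁ u₂) ∪ Ioc u₂ (min u₃ (1/2)) := by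
    ext w
    simp only [mem_inter_iff, mem_Ioc, mem_union, hBdef, mem_setOf_eq, le_min_iff]
    constructor
    · rintro ⟨hwB, hw1, hw2⟩
      have hHw1 : β < H w := H.strictMono hw1
      have hHw2 : H w ≤ β + 1 := by rw [← hβ12]; exact H.monotone hw2
      rcases le_or_gt (H w) ((m:ℝ) + 1/2) with hcase | hcase
      · have hceil : ⌈H w - 1/2⌉ = m := by
          rw [Int.ceil_eq_iff]
          constructor
          · push_cast; linarith
          · push_cast; linarith
        rw [hceil] at hwB
        left
        refine ⟨hw1, ?_, ?_⟩
        · calc w = H.symm (H w) := (H.symm_apply_apply w).symm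
            _ ≤ u₁ := H.symm.monotone (by linarith)
        · calc w = H.symm (H w) := (H.symm_apply_apply w).symm
            _ ≤ u₂ := H.symm.monotone (by linarith)
      · have hceil : ⌈H w - 1/2⌉ = m + 1 := by
          rw [Int.ceil_eq_iff]
          constructor
          · push_cast; linarith
          · push_cast; linarith
        rw [hceil] at hwB
        push_cast at hwB
        right
        refine ⟨?_, ?_, hw2⟩
        · calc u₂ = H.symm ((m:ℝ) + 1/2) := rfl
            _ < H.symm (H w) := H.symm.strictMono hcase
            _ = w := H.symm_apply_apply w
        · calc w = H.symm (H w) := (H.symm_apply_apply w).symm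
            _ ≤ u₃ := H.symm.monotone (by linarith)
    · rintro (⟨hw1, hwu1, hwu2⟩ | ⟨hw1, hwu3, hwhalf⟩)
      · have hw2 : w ≤ 1/2 := le_trans hwu2 hu2b
        have hHu1 : H w ≤ (m:ℝ) + v := by
          calc H w ≤ H u₁ := H.monotone hwu1
            _ = (m:ℝ) + v := H.apply_symm_apply _
        have hHw1 : β < H w := H.strictMono hw1
        have hceil : ⌈H w - 1/2⌉ = m := by
          rw [Int.ceil_eq_iff]
          constructor
          · push_cast; linarith
          · push_cast; linarith
        refine ⟨?_, hw1, hw2⟩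
        rw [hceil]
        linarith
      · have hw0 : -(1/2) < w := lt_trans hu2a hw1
        have hHw2 : H w ≤ β + 1 := by rw [← hβ12]; exact H.monotone hwhalf
        have hHcase : (m:ℝ) + 1/2 < H w := by
          calc (m:ℝ) + 1/2 = H u₂ := (H.apply_symm_apply _).symm
            _ < H w := H.strictMono hw1
        have hHu3 : H w ≤ (m:ℝ) + 1 + v := by
          calc H w ≤ H u₃ := H.monotone hwu3
            _ = (m:ℝ) + 1 + v := H.apply_symm_apply _
        have hceil : ⌈H w - 1/2⌉ = m + 1 := by
          rw [Int.ceil_eq_iff]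
          constructor
          · push_cast; linarith
          · push_cast; linarith
        refine ⟨?_, hw0, hwhalf⟩
        rw [hceil]
        push_cast
        linarith
  have hdisj : Disjoint (Ioc (-(1/2):ℝ) (min u₁ u₂)) (Ioc u₂ (min u₃ (1/2))) := by
    rw [Set.disjoint_left]
    intro w hwa hwb
    have h1 : w ≤ u₂ := le_trans hwa.2 (min_le_right _ _)
    exact absurd h1 (not_le.2 hwb.1)
  rw [hB2, hEq, measure_union hdisj measurableSet_Ioc, mta_Ioc, mta_Ioc, mta_Iic]
  have hFν2 : F0 ν u₂ = Fr μ ((m:ℝ) + 1/2) - c := by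
    rw [← hc ((m:ℝ) + 1/2), Fr_eq_F0_Icc ν hu2a.le hu2b]
  have hFrm : Fr μ ((m:ℝ) + 1/2) = 1 + m := by
    rw [show (m:ℝ) + 1/2 = 1/2 + (m:ℤ) by push_cast; ring, Fr_add_int,
      Fr_eq_F0_Icc μ (by norm_num) le_rfl, F0_of_ge μ le_rfl]
  have hFrv : Fr μ v = F0 μ v := Fr_eq_F0 μ hv hv2.le
  rcases le_or_gt ((m:ℝ) + v) β with hcaseB | hcaseA
  · -- case B : u₁ ≤ -1/2
    have hu1b : u₁ ≤ -(1/2) := by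
      calc u₁ ≤ H.symm β := H.symm.monotone hcaseB
        _ = -(1/2) := H.symm_apply_apply _
    have hmin1 : min u₁ u₂ = u₁ := min_eq_left (le_trans hu1b (le_of_lt hu2a))
    have hu3b : u₃ ≤ 1/2 := by
      calc u₃ ≤ H.symm (β + 1) := H.symm.monotone (by linarith)
        _ = 1/2 := by rw [← hβ12, H.symm_apply_apply]
    have hmin3 : min u₃ (1/2) = u₃ := min_eq_left hu3b
    have hu3a : -(1/2) < u₃ :=
      calc -(1/2) = H.symm β := (H.symm_apply_apply _).symm
        _ < u₃ := H.symm.strictMono (by linarith)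
    have hF1 : F0 ν u₁ = 0 := F0_of_le ν hu1b
    have hF3 : F0 ν u₃ = Fr μ ((m:ℝ) + 1 + v) - c := by
      rw [← hc ((m:ℝ) + 1 + v), Fr_eq_F0_Icc ν hu3a.le hu3b]
    have hFrm1 : Fr μ ((m:ℝ) + 1 + v) = Fr μ v + m + 1 := by
      rw [show (m:ℝ) + 1 + v = v + ((m + 1 : ℤ) : ℝ) by push_cast; ring, Fr_add_int]
      push_cast
      ring
    rw [hmin1, hmin3, hF1, hF3, hFν2, hFrm, hFrm1, F0_of_le ν le_rfl]
    rw [show (0:ℝ) - 0 = 0 by ring, ENNReal.ofReal_zero, zero_add, hFrv]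
    congr 1
    ring
  · -- case A : u₁ > -1/2
    have hu1a : -(1/2) < u₁ :=
      calc -(1/2) = H.symm β := (H.symm_apply_apply _).symm
        _ < u₁ := H.symm.strictMono hcaseA
    have hu1u2 : u₁ ≤ u₂ := H.symm.monotone (by linarith)
    have hmin1 : min u₁ u₂ = u₁ := min_eq_left hu1u2
    have hu3b : (1/2:ℝ) ≤ u₃ := by
      calc (1/2:ℝ) = H.symm (β + 1) := by rw [← hβ12, H.symm_apply_apply]
        _ ≤ u₃ := H.symm.monotone (by linarith)
    have hmin3 : min u₃ (1/2) = (1/2:ℝ) := min_eq_right hu3b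
    have hF1 : F0 ν u₁ = Fr μ ((m:ℝ) + v) - c := by
      rw [← hc ((m:ℝ) + v), Fr_eq_F0_Icc ν hu1a.le (le_trans hu1u2 hu2b)]
    have hFrmv : Fr μ ((m:ℝ) + v) = Fr μ v + m := by
      rw [show (m:ℝ) + v = v + ((m : ℤ) : ℝ) by push_cast; ring, Fr_add_int]
    rw [hmin1, hmin3, hF1, hFν2, hFrm, hFrmv, F0_of_le ν le_rfl, F0_of_ge ν le_rfl]
    rw [← ENNReal.ofReal_add (by linarith [F0_nonneg ν u₁, hF1, hFrmv]) (by linarith [F0_le_one ν u₂, hFν2, hFrm]), hFrv]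
    congr 1
    ring

lemma sin_disp_bound {d s' : ℝ} (hs0 : 0 < s') (hs2 : s' ≤ 1/2) (hd : |d| ≤ s') :
    2 * |Real.sin (π * d)| ≤ 2 * Real.sin (π * s') := by
  have hd2 : |d| ≤ 1/2 := le_trans hd hs2
  obtain ⟨hdl, hdr⟩ := abs_le.1 hd2
  rw [abs_sin_pi hdl hdr]
  have hpi := Real.pi_pos
  have habs := abs_nonneg d
  have h1 : π * |d| ∈ Set.Icc (-(π/2)) (π/2) := by
    rw [Set.mem_Icc]
    constructor
    · nlinarith
    · nlinarith
  have h2 : π * s' ∈ Set.Icc (-(π/2)) (π/2) := by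
    rw [Set.mem_Icc]
    constructor
    · nlinarith
    · nlinarith
  have hmono := Real.strictMonoOn_sin.monotoneOn h1 h2 (by nlinarith)
  linarith

lemma half_ineq (F G : ℝ → ℝ) (hFmono : Monotone F) (hGmono : Monotone G)
    (hF1 : ∀ x, F (x + 1) = F x + 1) (hG1 : ∀ x, G (x + 1) = G x + 1) :
    ∀ a b : ℝ, a ≤ b → F b - F a ≤ G (b + 1/2) - G (a - 1/2) := by
  have core : ∀ a b : ℝ, a ≤ b → b - a < 1 → F b - F a ≤ G (b + 1/2) - G (a - 1/2) := by
    intro a b hab hlen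
    have h1 : F b ≤ F a + 1 := by
      have := hFmono (show b ≤ a + 1 by linarith)
      rw [hF1] at this
      linarith
    have h2 : G (a - 1/2) + 1 ≤ G (b + 1/2) := by
      have := hGmono (show a - 1/2 + 1 ≤ b + 1/2 by linarith)
      rw [hG1] at this
      linarith
    linarith
  have main : ∀ n : ℕ, ∀ a b : ℝ, a ≤ b → b - a < n + 1 →
      F b - F a ≤ G (b + 1/2) - G (a - 1/2) := by
    intro n
    induction n with
    | zero => intro a b hab hlen; exact core a b hab (by push_cast at hlen; linarith)
    | succ n ih =>
      intro a b hab hlen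
      rcases lt_or_ge (b - a) (n + 1) with hcs | hcs
      · exact ih a b hab hcs
      · have h0 : (0:ℝ) ≤ (n:ℝ) := Nat.cast_nonneg n
        have h1 := ih (a + 1) b (by linarith) (by push_cast at hlen ⊢; linarith)
        have h2 : F (a + 1) = F a + 1 := hF1 a
        have h3 : G (a + 1 - 1/2) = G (a - 1/2) + 1 := by
          rw [show a + 1 - 1/2 = (a - 1/2) + 1 by ring, hG1]
        rw [h3] at h1
        linarith
  intro a b hab
  obtain ⟨n, hn⟩ := exists_nat_gt (b - a)
  exact main n a b hab (by linarith)

end Transport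

section WInf

lemma winf_nonneg (μ ν : Measure S) : 0 ≤ infWasserstein μ ν :=
  Real.sInf_nonneg (fun _ hx => hx.1.le)

lemma wset_facts (μ ν : Measure S) [IsProbabilityMeasure μ] [IsProbabilityMeasure ν] {r : ℝ}
    (hr : infWasserstein μ ν < r) :
    ∀ U : Set S, IsOpen U →
      μ U ≤ ν (Metric.thickening r U) ∧ ν U ≤ μ (Metric.thickening r U) := by
  set WS := {t : ℝ | 0 < t ∧ ∀ U : Set S, IsOpen U →
    μ U ≤ ν (Metric.thickening t U) ∧ ν U ≤ μ (Metric.thickening t U)} with hWS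
  have hne : WS.Nonempty := by
    refine ⟨3, by norm_num, fun U hU => ?_⟩
    by_cases hUe : U = ∅
    · subst hUe
      simp
    · obtain ⟨w, hw⟩ := nonempty_iff_ne_empty.mpr hUe
      have hthick : Metric.thickening (3:ℝ) U = univ := by
        apply eq_univ_of_forall
        intro z
        rw [Metric.mem_thickening_iff]
        refine ⟨w, hw, ?_⟩
        have h1 : dist z w ≤ 2 := by
          rw [Subtype.dist_eq, Complex.dist_eq]
          calc ‖(z:ℂ) - (w:ℂ)‖ ≤ ‖(z:ℂ)‖ + ‖(w:ℂ)‖ := by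
                have h2 := norm_sub_le (z:ℂ) (w:ℂ)
                simpa using h2
            _ = 2 := by rw [S_coe_eq z, S_coe_eq w]; norm_num
        linarith
      constructor
      · rw [hthick, measure_univ]; exact prob_le_one
      · rw [hthick, measure_univ]; exact prob_le_one
  have h2 : infWasserstein μ ν = sInf WS := rfl
  rw [h2] at hr
  obtain ⟨t, htW, htr⟩ := exists_lt_of_csInf_lt hne hr
  intro U hU
  exact ⟨le_trans (htW.2 U hU).1 (measure_mono (Metric.thickening_mono htr.le U)),
    le_trans (htW.2 U hU).2 (measure_mono (Metric.thickening_mono htr.le U))⟩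

lemma winf_self_lt (μ : Measure S) {ε : ℝ} (hε : 0 < ε) : infWasserstein μ μ < ε := by
  have hmem : ε/2 ∈ {t : ℝ | 0 < t ∧ ∀ U : Set S, IsOpen U →
      μ U ≤ μ (Metric.thickening t U) ∧ μ U ≤ μ (Metric.thickening t U)} :=
    ⟨half_pos hε, fun U _ => ⟨measure_mono (Metric.self_subset_thickening (half_pos hε) U),
      measure_mono (Metric.self_subset_thickening (half_pos hε) U)⟩⟩
  have hle : infWasserstein μ μ ≤ ε/2 := csInf_le ⟨0, fun x hx => hx.1.le⟩ hmem
  linarith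

end WInf

end

end CTC

/-- The unit circle in the plane, with the Euclidean (chordal) metric, has continuous
transport constant `1`: for faithful diffuse Borel probability measures `μ, ν` and
`ε > 0` there is a homeomorphism `h` homotopic to the identity with
`W_∞(μ, h_*ν) < ε` and `sup_z |h(z) − z| < W_∞(μ, ν) + ε`. -/
theorem continuous_transport_constant_one_of_circle
    (X : Set ℂ) (hX : X = {z : ℂ | ‖z‖ = 1})
    (μ ν : Measure X) [IsProbabilityMeasure μ] [IsProbabilityMeasure ν]
    (hμfaithful : ∀ U : Set X, IsOpen U → U.Nonempty → 0 < μ U)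
    (hνfaithful : ∀ U : Set X, IsOpen U → U.Nonempty → 0 < ν U)
    (hμdiffuse : ∀ x : X, μ {x} = 0)
    (hνdiffuse : ∀ x : X, ν {x} = 0)
    (ε : ℝ) (hε : 0 < ε) :
    ∃ h : X ≃ₜ X,
      ContinuousMap.Homotopic (h : C(X, X)) (ContinuousMap.id X) ∧
      infWasserstein μ (Measure.map (⇑h) ν) < ε ∧
      (⨆ z : X, ‖(h z : ℂ) - (z : ℂ)‖) < infWasserstein μ ν + ε := by
  subst hX
  obtain ⟨s', hs0, hs2, hb, hi, hii⟩ :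
      ∃ s' : ℝ, 0 < s' ∧ s' ≤ 1/2 ∧
        2 * Real.sin (Real.pi * s') ≤ infWasserstein μ ν + ε/2 ∧
        (∀ a b : ℝ, a ≤ b →
          CTC.Fr μ b - CTC.Fr μ a ≤ CTC.Fr ν (b + s') - CTC.Fr ν (a - s')) ∧
        (∀ a b : ℝ, a ≤ b →
          CTC.Fr ν b - CTC.Fr ν a ≤ CTC.Fr μ (b + s') - CTC.Fr μ (a - s')) := by
    have hW0 : 0 ≤ infWasserstein μ ν := CTC.winf_nonneg μ ν
    rcases lt_or_ge (infWasserstein μ ν + ε/2) 2 with hcase | hcase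
    · set r := infWasserstein μ ν + ε/2 with hrdef
      clear_value r
      have hrpos : 0 < r := by rw [hrdef]; linarith
      have hrlt : infWasserstein μ ν < r := by rw [hrdef]; linarith
      have hrW := CTC.wset_facts μ ν hrlt
      have hspos : 0 < Real.arcsin (r/2) / Real.pi :=
        div_pos (Real.arcsin_pos.2 (by linarith)) Real.pi_pos
      have hshalf : Real.arcsin (r/2) / Real.pi ≤ 1/2 := by
        rw [div_le_iff₀ Real.pi_pos]
        linarith [Real.arcsin_le_pi_div_two (r/2)]
      have hsin : 2 * Real.sin (Real.pi * (Real.arcsin (r/2) / Real.pi)) = r := by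
        rw [show Real.pi * (Real.arcsin (r/2) / Real.pi) = Real.arcsin (r/2) by
          field_simp]
        rw [Real.sin_arcsin (by linarith) (by linarith)]
        ring
      refine ⟨Real.arcsin (r/2) / Real.pi, hspos, hshalf, by rw [hsin], ?_, ?_⟩
      · apply CTC.key_ineq μ ν hμfaithful hνfaithful hμdiffuse hνdiffuse hspos hshalf
        intro U hU
        rw [hsin]
        exact (hrW U hU).1
      · apply CTC.key_ineq ν μ hνfaithful hμfaithful hνdiffuse hμdiffuse hspos hshalf
        intro U hU
        rw [hsin]
        exact (hrW U hU).2
    · refine ⟨1/2, by norm_num, le_rfl, ?_, ?_, ?_⟩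
      · rw [show Real.pi * (1/2 : ℝ) = Real.pi/2 by ring, Real.sin_pi_div_two]
        linarith
      · exact CTC.half_ineq (CTC.Fr μ) (CTC.Fr ν)
          (CTC.Fr_strictMono μ hμfaithful).monotone (CTC.Fr_strictMono ν hνfaithful).monotone
          (CTC.Fr_add_one μ) (CTC.Fr_add_one ν)
      · exact CTC.half_ineq (CTC.Fr ν) (CTC.Fr μ)
          (CTC.Fr_strictMono ν hνfaithful).monotone (CTC.Fr_strictMono μ hμfaithful).monotone
          (CTC.Fr_add_one ν) (CTC.Fr_add_one μ)
  -- choice of the rotation constant c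
  have claim : ∀ x y : ℝ, CTC.Fr μ (x - s') - CTC.Fr ν x ≤ CTC.Fr μ (y + s') - CTC.Fr ν y := by
    intro x y
    rcases le_total x y with hxy | hxy
    · have h1 := hii x y hxy
      linarith
    · rcases le_or_gt (y + 2*s') x with hfar | hnear
      · have h1 := hi (y + s') (x - s') (by linarith)
        rw [show x - s' + s' = x by ring, show y + s' - s' = y by ring] at h1
        linarith
      · have h1 : CTC.Fr μ (x - s') ≤ CTC.Fr μ (y + s') :=
          (CTC.Fr_strictMono μ hμfaithful).monotone (by linarith)
        have h2 : CTC.Fr ν y ≤ CTC.Fr ν x := (CTC.Fr_strictMono ν hνfaithful).monotone hxy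
        linarith
  have hbddA : BddAbove (Set.range (fun x : ℝ => CTC.Fr μ (x - s') - CTC.Fr ν x)) := by
    refine ⟨CTC.Fr μ (0 + s') - CTC.Fr ν 0, ?_⟩
    rintro _ ⟨x, rfl⟩
    exact claim x 0
  set c := sSup (Set.range (fun x : ℝ => CTC.Fr μ (x - s') - CTC.Fr ν x)) with hcdef
  have hc1 : ∀ x, CTC.Fr μ (x - s') ≤ CTC.Fr ν x + c := by
    intro x
    have h1 : CTC.Fr μ (x - s') - CTC.Fr ν x ≤ c := le_csSup hbddA ⟨x, rfl⟩
    linarith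
  have hc2' : ∀ x, CTC.Fr ν x + c ≤ CTC.Fr μ (x + s') := by
    intro x
    have h1 : c ≤ CTC.Fr μ (x + s') - CTC.Fr ν x := by
      apply csSup_le (Set.range_nonempty _)
      rintro _ ⟨y, rfl⟩
      exact claim y x
    linarith
  -- the order isomorphisms
  set Φμ : ℝ ≃o ℝ := StrictMono.orderIsoOfSurjective (CTC.Fr μ)
    (CTC.Fr_strictMono μ hμfaithful) (CTC.Fr_surjective μ hμfaithful hμdiffuse) with hΦμ
  set Φν : ℝ ≃o ℝ := StrictMono.orderIsoOfSurjective (CTC.Fr ν)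
    (CTC.Fr_strictMono ν hνfaithful) (CTC.Fr_surjective ν hνfaithful hνdiffuse) with hΦν
  have hΦμc : ∀ x, Φμ x = CTC.Fr μ x := fun x => rfl
  have hΦνc : ∀ x, Φν x = CTC.Fr ν x := fun x => rfl
  set H : ℝ ≃o ℝ := (Φν.trans (OrderIso.addRight c)).trans Φμ.symm with hHdef
  have hHc : ∀ w, H w = Φμ.symm (CTC.Fr ν w + c) := fun w => rfl
  have hΦμ1 : ∀ x, Φμ (x + 1) = Φμ x + 1 := fun x => by
    rw [hΦμc, hΦμc, CTC.Fr_add_one]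
  have hH1 : ∀ x, H (x + 1) = H x + 1 := by
    intro x
    rw [hHc, hHc, CTC.Fr_add_one]
    rw [show CTC.Fr ν x + 1 + c = (CTC.Fr ν x + c) + 1 by ring]
    exact CTC.oi_add_one_symm Φμ hΦμ1 _
  have hHsymc : ∀ y, CTC.Fr ν (H.symm y) = CTC.Fr μ y - c := by
    intro y
    have hkey : H (Φν.symm (CTC.Fr μ y - c)) = y := by
      rw [hHc]
      have h1 : CTC.Fr ν (Φν.symm (CTC.Fr μ y - c)) = CTC.Fr μ y - c := by
        have h2 := Φν.apply_symm_apply (CTC.Fr μ y - c)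
        rw [hΦνc] at h2
        exact h2
      rw [h1, show CTC.Fr μ y - c + c = CTC.Fr μ y by ring]
      have h3 := Φμ.symm_apply_apply y
      rw [hΦμc] at h3
      exact h3
    have h2 : H.symm y = Φν.symm (CTC.Fr μ y - c) := by
      have h5 := congrArg H.symm hkey
      rw [H.symm_apply_apply] at h5
      exact h5.symm
    rw [h2]
    have h4 := Φν.apply_symm_apply (CTC.Fr μ y - c)
    rw [hΦνc] at h4
    exact h4
  have hdisp : ∀ w, |H w - w| ≤ s' := by
    intro w
    have h1 : w - s' ≤ H w := by
      have ha : Φμ (w - s') ≤ CTC.Fr ν w + c := by rw [hΦμc]; exact hc1 w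
      have h3 := Φμ.symm.monotone ha
      rw [Φμ.symm_apply_apply] at h3
      rw [hHc]
      exact h3
    have h2 : H w ≤ w + s' := by
      have ha : CTC.Fr ν w + c ≤ Φμ (w + s') := by rw [hΦμc]; exact hc2' w
      have h3 := Φμ.symm.monotone ha
      rw [Φμ.symm_apply_apply] at h3
      rw [hHc]
      exact h3
    rw [abs_le]
    exact ⟨by linarith, by linarith⟩
  refine ⟨CTC.circHomeo H hH1, CTC.circHomeo_homotopic H hH1, ?_, ?_⟩
  · have hmap : Measure.map (⇑(CTC.circHomeo H hH1)) ν = μ :=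
      CTC.pushforward_eq μ ν H hH1 c hHsymc
    rw [hmap]
    exact CTC.winf_self_lt μ hε
  · have hone : ∀ z : CTC.S,
        ‖((CTC.circHomeo H hH1) z : ℂ) - (z:ℂ)‖ ≤ 2 * Real.sin (Real.pi * s') := by
      intro z
      have h1 : dist (CTC.pt (H (CTC.ang z))) (CTC.pt (CTC.ang z))
          = 2 * |Real.sin (Real.pi * (H (CTC.ang z) - CTC.ang z))| := CTC.dist_pt _ _
      rw [CTC.pt_ang z] at h1
      have h2 : ‖((CTC.circHomeo H hH1) z : ℂ) - (z:ℂ)‖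
          = dist ((CTC.circHomeo H hH1) z) z := by
        rw [Subtype.dist_eq, Complex.dist_eq]
      rw [h2, show (CTC.circHomeo H hH1) z = CTC.pt (H (CTC.ang z)) from rfl, h1]
      exact CTC.sin_disp_bound hs0 hs2 (hdisp (CTC.ang z))
    calc (⨆ z : CTC.S, ‖((CTC.circHomeo H hH1) z : ℂ) - (z:ℂ)‖)
        ≤ 2 * Real.sin (Real.pi * s') := ciSup_le hone
      _ ≤ infWasserstein μ ν + ε/2 := hb
      _ < infWasserstein μ ν + ε := by linarith
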